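/- Let K be a nonnegative n×n matrix and α ∈ [0,1]. Define S_α(K) to be the matrix with entries K(i,j)^α K(j,i)^{1−α}. Then entrywise S_α(K²) ≥ S_α(K)², i.e., for all i,j, (∑_z K(i,z)K(z,j))^α (∑_z K(j,z)K(z,i))^{1−α} ≥ ∑_z K(i,z)^α K(z,i)^{1−α} K(z,j)^α K(j,z)^{1−α}. -/

import Mathlib

open scoped ENNReal
open Finset
noncomputable def specRad {n : ℕ} (A : Matrix (Fin n) (Fin n) ℝ) : ℝ≥0∞ :=
  spectralRadius ℂ (A.map (algebraMap ℝ ℂ))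
noncomputable def opNorm {n : ℕ} (A : Matrix (Fin n) (Fin n) ℝ) : ℝ :=
  ‖Matrix.toEuclideanCLM (𝕜 := ℝ) A‖

theorem stmt9 {n : ℕ} (K : Matrix (Fin n) (Fin n) ℝ) (hK : ∀ i j, 0 ≤ K i j)
    (α : ℝ) (hα : α ∈ Set.Icc (0:ℝ) 1) :
    ∀ i j, ∑ z, (K i z) ^ α * (K z i) ^ (1 - α) * ((K z j) ^ α * (K j z) ^ (1 - α)) ≤
      (∑ z, K i z * K z j) ^ α * (∑ z, K j z * K z i) ^ (1 - α) := by
  obtain ⟨hα0, hα1⟩ := hα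
  intro i j
  rcases eq_or_lt_of_le hα0 with h0 | h0
  · simp only [← h0, Real.rpow_zero, one_mul, sub_zero, Real.rpow_one]
    exact le_of_eq (Finset.sum_congr rfl fun z _ => mul_comm _ _)
  rcases eq_or_lt_of_le hα1 with h1 | h1
  · simp only [h1, Real.rpow_one, sub_self, Real.rpow_zero, mul_one]
    exact le_refl _
  have h1' : 0 < 1 - α := by linarith
  have hpq : Real.HolderConjugate (1/α) (1/(1-α)) := by
    rw [Real.holderConjugate_iff]; constructor
    · rw [lt_div_iff₀ h0, one_mul]; exact h1
    · field_simp; ring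
  have key := Real.inner_le_Lp_mul_Lq_of_nonneg Finset.univ hpq
    (f := fun z => (K i z * K z j) ^ α) (g := fun z => (K j z * K z i) ^ (1 - α))
    (fun z _ => Real.rpow_nonneg (mul_nonneg (hK _ _) (hK _ _)) _)
    (fun z _ => Real.rpow_nonneg (mul_nonneg (hK _ _) (hK _ _)) _)
  have e1 : ∀ z : Fin n, ((K i z * K z j) ^ α) ^ (1/α) = K i z * K z j := fun z => by
    rw [← Real.rpow_mul (mul_nonneg (hK _ _) (hK _ _)), mul_one_div_cancel h0.ne',
      Real.rpow_one]
  have e2 : ∀ z : Fin n, ((K j z * K z i) ^ (1 - α)) ^ (1/(1-α)) = K j z * K z i := fun z => by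
    rw [← Real.rpow_mul (mul_nonneg (hK _ _) (hK _ _)), mul_one_div_cancel h1'.ne',
      Real.rpow_one]
  simp only [e1, e2, one_div_one_div] at key
  refine le_trans (le_of_eq ?_) key
  refine Finset.sum_congr rfl fun z _ => ?_
  rw [Real.mul_rpow (hK _ _) (hK _ _), Real.mul_rpow (hK _ _) (hK _ _)]
  ring
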